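/- Let F be a strictly 1-balanced graph on r ≥ 3 vertices, let C be a dense clean F-cycle of length k ≥ 2, and let S be the shadow graph of C. Then e(S) = k·e(F), v(S) = k(r−1), so e(S)/v(S) = d_1(F), and every proper subgraph S' of S with at least one edge satisfies e(S')/v(S') < e(S)/v(S); that is, S is strictly balanced. -/

import Mathlib

open scoped Classical
open Filter Asymptotics

noncomputable section

/-! ### Basic graph quantities -/

/-- The number of edges of a simple graph. -/
def edgeCnt {V : Type*} (G : SimpleGraph V) : ℕ := G.edgeSet.ncard

/-- The 1-density `e(F)/(v(F)-1)` of a graph `F` on `r` vertices. -/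
def d1 {r : ℕ} (F : SimpleGraph (Fin r)) : ℝ := (edgeCnt F : ℝ) / ((r : ℝ) - 1)

/-- `F` is strictly 1-balanced: every proper subgraph `S` with at least 2 vertices and at
least one edge satisfies `d₁(S) < d₁(F)`. -/
def Strictly1Balanced {r : ℕ} (F : SimpleGraph (Fin r)) : Prop :=
  ∀ S : F.Subgraph, S ≠ ⊤ → 2 ≤ S.verts.ncard → 1 ≤ S.edgeSet.ncard →
    (S.edgeSet.ncard : ℝ) / ((S.verts.ncard : ℝ) - 1) < d1 F

/-- The number of automorphisms of `F`. -/
def autCard {r : ℕ} (F : SimpleGraph (Fin r)) : ℕ := Nat.card (F ≃g F)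

/-! ### Copies of `F` in a graph, `F`-factors, `F`-isolated vertices -/

/-- `φ` is a copy of `F` in `G` (an embedding of `F` as a not necessarily induced subgraph). -/
def IsCopyIn {r n : ℕ} (F : SimpleGraph (Fin r)) (G : SimpleGraph (Fin n))
    (φ : Fin r ↪ Fin n) : Prop :=
  ∀ u v, F.Adj u v → G.Adj (φ u) (φ v)

/-- `G` contains an `F`-factor: pairwise vertex-disjoint copies of `F` covering all vertices. -/
def HasFFactor {r n : ℕ} (F : SimpleGraph (Fin r)) (G : SimpleGraph (Fin n)) : Prop :=
  ∃ Φ : Finset (Fin r ↪ Fin n),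
    (∀ φ ∈ Φ, IsCopyIn F G φ) ∧
    (∀ φ ∈ Φ, ∀ ψ ∈ Φ, φ ≠ ψ → ∀ x : Fin n, ¬(x ∈ Set.range φ ∧ x ∈ Set.range ψ)) ∧
    (∀ x : Fin n, ∃ φ ∈ Φ, x ∈ Set.range φ)

/-- Vertex `x` is `F`-isolated in `G`: no copy of `F` in `G` contains `x`. -/
def FIsolated {r n : ℕ} (F : SimpleGraph (Fin r)) (G : SimpleGraph (Fin n)) (x : Fin n) : Prop :=
  ∀ φ : Fin r ↪ Fin n, IsCopyIn F G φ → x ∉ Set.range φ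

/-! ### The random graph `G(n,p)` -/

/-- Probability of the event `P` in the Erdős–Rényi random graph `G(n,p)`. -/
def gnpProb (n : ℕ) (p : ℝ) (P : SimpleGraph (Fin n) → Prop) : ℝ :=
  ∑ G : SimpleGraph (Fin n),
    if P G then p ^ edgeCnt G * (1 - p) ^ (n.choose 2 - edgeCnt G) else 0

/-- The sharp threshold `p* = ((aut F / r!) · ln n / C(n-1, r-1))^(1/e(F))`. -/
def pstar {r : ℕ} (F : SimpleGraph (Fin r)) (n : ℕ) : ℝ :=
  ((autCard F : ℝ) / (r.factorial : ℝ) * Real.log n / ((n - 1).choose (r - 1) : ℝ)) ^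
    ((1 : ℝ) / (edgeCnt F : ℝ))

/-! ### `F`-edges and `F`-graphs -/

/-- An `F`-edge: a pair (vertex set, edge set); the copies of `F` among these are singled out
by `FEdge.IsCopyOf`. -/
abbrev FEdge (V : Type*) := Finset V × Finset (Sym2 V)

/-- `h` is a copy of `F` with vertices in `V`. -/
def FEdge.IsCopyOf {r : ℕ} {V : Type*} (h : FEdge V) (F : SimpleGraph (Fin r)) : Prop :=
  ∃ φ : Fin r → V, Function.Injective φ ∧ (↑h.1 : Set V) = Set.range φ ∧
    (↑h.2 : Set (Sym2 V)) = Sym2.map φ '' F.edgeSet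

/-- An `F`-graph: a vertex set together with a set of `F`-edges. -/
abbrev FGraph (V : Type*) := Finset V × Finset (FEdge V)

/-- Well-formedness of an `F`-graph w.r.t. `F`: every `F`-edge is a copy of `F` with
vertices inside the vertex set. -/
def FGraph.Wf {r : ℕ} {V : Type*} (H : FGraph V) (F : SimpleGraph (Fin r)) : Prop :=
  ∀ h ∈ H.2, FEdge.IsCopyOf h F ∧ h.1 ⊆ H.1

/-- The edge set of the shadow graph of an `F`-graph. -/
def shadowEdges {V : Type*} [DecidableEq V] (H : FGraph V) : Finset (Sym2 V) :=
  H.2.sup Prod.snd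

/-- The shadow graph of an `F`-graph. -/
def shadow {V : Type*} [DecidableEq V] (H : FGraph V) : SimpleGraph V :=
  SimpleGraph.fromEdgeSet ↑(shadowEdges H)

/-- Number of connected components of the shadow graph of `H` (on the vertex set of `H`). -/
def compCount {V : Type*} [DecidableEq V] (H : FGraph V) : ℕ :=
  Nat.card ((shadow H).induce (↑H.1 : Set V)).ConnectedComponent

/-- An `F`-graph is connected if its shadow graph is. -/
def FGraphConnected {V : Type*} [DecidableEq V] (H : FGraph V) : Prop :=
  ((shadow H).induce (↑H.1 : Set V)).Connected

/-- The nullity `n(H) = (r-1)e(H) + c(H) - v(H)` of an `F`-graph. -/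
def nullity (r : ℕ) {V : Type*} [DecidableEq V] (H : FGraph V) : ℤ :=
  ((r : ℤ) - 1) * H.2.card + compCount H - H.1.card

/-- An avoidable configuration: a connected `F`-graph of nullity at least 2. -/
def Avoidable {r : ℕ} {V : Type*} [DecidableEq V] (F : SimpleGraph (Fin r))
    (H : FGraph V) : Prop :=
  FGraph.Wf H F ∧ FGraphConnected H ∧ 2 ≤ nullity r H

/-- The `F`-edge `h` is induced by the `F`-graph `H`: it is a copy of `F`, not an `F`-edge of
`H`, but all its edges lie in the shadow graph of `H`. -/
def InducedBy {r : ℕ} {V : Type*} [DecidableEq V] (F : SimpleGraph (Fin r)) (h : FEdge V)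
    (H : FGraph V) : Prop :=
  FEdge.IsCopyOf h F ∧ h ∉ H.2 ∧ h.2 ⊆ shadowEdges H

/-- `C` is a clean `F`-cycle of length `k`. -/
def IsCleanCycleOfLen {r : ℕ} {V : Type*} [DecidableEq V] (F : SimpleGraph (Fin r))
    (C : FGraph V) (k : ℕ) : Prop :=
  FGraph.Wf C F ∧ C.1 = C.2.sup Prod.fst ∧
  ((k = 2 ∧ ∃ h₁ h₂ : FEdge V, h₁ ≠ h₂ ∧ C.2 = {h₁, h₂} ∧ (h₁.1 ∩ h₂.1).card = 2) ∨
   (3 ≤ k ∧ ∃ h : Fin k → FEdge V, Function.Injective h ∧ C.2 = Finset.image h Finset.univ ∧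
     ∃ v : Fin k → V, Function.Injective v ∧
       (∀ i j : Fin k, ((i : ℕ) + 1) % k = (j : ℕ) → (h i).1 ∩ (h j).1 = {v i}) ∧
       (∀ i j : Fin k, i ≠ j → ((i : ℕ) + 1) % k ≠ (j : ℕ) → ((j : ℕ) + 1) % k ≠ (i : ℕ) →
         (h i).1 ∩ (h j).1 = ∅)))

/-- `C` is a clean `F`-cycle (of some length `k ≥ 2`). -/
def IsCleanCycle {r : ℕ} {V : Type*} [DecidableEq V] (F : SimpleGraph (Fin r))
    (C : FGraph V) : Prop :=
  ∃ k, IsCleanCycleOfLen F C k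

/-- `C` is a sparse clean `F`-cycle: a clean `F`-cycle of length 2 whose two overlap vertices
form an edge of both of its `F`-edges. -/
def IsSparse {r : ℕ} {V : Type*} [DecidableEq V] (F : SimpleGraph (Fin r))
    (C : FGraph V) : Prop :=
  IsCleanCycleOfLen F C 2 ∧ ∃ h₁ h₂ : FEdge V, h₁ ≠ h₂ ∧ C.2 = {h₁, h₂} ∧
    ∃ x y : V, x ≠ y ∧ h₁.1 ∩ h₂.1 = {x, y} ∧ s(x, y) ∈ h₁.2 ∧ s(x, y) ∈ h₂.2

/-! ### The random `F`-graph `H_F(n,π)` -/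

/-- All potential `F`-edges on the vertex set `Fin n`. -/
def allFEdges (r n : ℕ) (F : SimpleGraph (Fin r)) : Finset (FEdge (Fin n)) :=
  Finset.univ.filter fun h => FEdge.IsCopyOf h F

/-- Expectation of `X` under the random `F`-graph `H_F(n,π)`, whose `F`-edge set is a random
subset of `allFEdges r n F`, each `F`-edge present independently with probability `π`. -/
def hfExp (r n : ℕ) (F : SimpleGraph (Fin r)) (π : ℝ)
    (X : Finset (FEdge (Fin n)) → ℝ) : ℝ :=
  ∑ S ∈ (allFEdges r n F).powerset,
    π ^ S.card * (1 - π) ^ ((allFEdges r n F).card - S.card) * X S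

/-- Probability of `P` under the random `F`-graph `H_F(n,π)`. -/
def hfProb (r n : ℕ) (F : SimpleGraph (Fin r)) (π : ℝ)
    (P : Finset (FEdge (Fin n)) → Prop) : ℝ :=
  hfExp r n F π fun S => if P S then 1 else 0

/-! ### Maps, isomorphisms and copies of `F`-graphs -/

/-- Image of an `F`-edge under a vertex map. -/
def FEdge.map {V W : Type*} [DecidableEq W] (ψ : V → W) (h : FEdge V) : FEdge W :=
  (h.1.image ψ, h.2.image (Sym2.map ψ))

/-- Image of an `F`-graph under a vertex map. -/
def FGraph.map {V W : Type*} [DecidableEq V] [DecidableEq W] (ψ : V → W)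
    (H : FGraph V) : FGraph W :=
  (H.1.image ψ, H.2.image (FEdge.map ψ))

/-- `H` is isomorphic to `K` via a vertex bijection mapping `F`-edges to `F`-edges. -/
def FGraph.IsoTo {V W : Type*} [DecidableEq V] [DecidableEq W] (H : FGraph V)
    (K : FGraph W) : Prop :=
  ∃ ψ : V → W, Set.InjOn ψ ↑H.1 ∧ FGraph.map ψ H = K

/-- The number of copies of the `F`-graph `H` among a set `S` of `F`-edges on `Fin n`. -/
def copyCount {V : Type*} [DecidableEq V] (H : FGraph V) {n : ℕ}
    (S : Finset (FEdge (Fin n))) : ℕ :=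
  Nat.card {K : FGraph (Fin n) // K.2 ⊆ S ∧ FGraph.IsoTo H K}

/-- Union of two `F`-graphs. -/
def FGraph.union {V : Type*} [DecidableEq V] (H K : FGraph V) : FGraph V :=
  (H.1 ∪ K.1, H.2 ∪ K.2)

/-! ### d-graphs and the random d-graph `G*(n,p)` -/

/-- A d-graph: vertices, usual edges, and dummy edges (identified with sparse clean
`F`-cycles). -/
abbrev DGraph (V : Type*) := Finset V × Finset (Sym2 V) × Finset (FGraph V)

/-- All potential usual edges on `Fin n`. -/
def allUsual (n : ℕ) : Finset (Sym2 (Fin n)) := Finset.univ.filter fun e => ¬e.IsDiag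

/-- All potential dummy edges on `Fin n`: the sparse clean `F`-cycles. -/
def allDummies (r n : ℕ) (F : SimpleGraph (Fin r)) : Finset (FGraph (Fin n)) :=
  Finset.univ.filter fun C => IsSparse F C

/-- Expectation of `X` under the random d-graph `G*(n,p)`: each usual edge and each dummy
edge is included independently with probability `p`. -/
def dgExp (r n : ℕ) (F : SimpleGraph (Fin r)) (p : ℝ)
    (X : Finset (Sym2 (Fin n)) → Finset (FGraph (Fin n)) → ℝ) : ℝ :=
  ∑ U ∈ (allUsual n).powerset, ∑ D ∈ (allDummies r n F).powerset,
    p ^ (U.card + D.card) *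
      (1 - p) ^ (((allUsual n).card - U.card) + ((allDummies r n F).card - D.card)) * X U D

/-- Probability of `P` under the random d-graph `G*(n,p)`. -/
def dgProb (r n : ℕ) (F : SimpleGraph (Fin r)) (p : ℝ)
    (P : Finset (Sym2 (Fin n)) → Finset (FGraph (Fin n)) → Prop) : ℝ :=
  dgExp r n F p fun U D => if P U D then 1 else 0

/-- Image of a d-graph under a vertex map. -/
def DGraph.map {V W : Type*} [DecidableEq V] [DecidableEq W] (ψ : V → W)
    (K : DGraph V) : DGraph W :=
  (K.1.image ψ, K.2.1.image (Sym2.map ψ), K.2.2.image (FGraph.map ψ))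

/-- `K` is isomorphic to `L` as a d-graph. -/
def DGraph.IsoTo {V W : Type*} [DecidableEq V] [DecidableEq W] (K : DGraph V)
    (L : DGraph W) : Prop :=
  ∃ ψ : V → W, Set.InjOn ψ ↑K.1 ∧ DGraph.map ψ K = L

/-- The number of copies of the d-graph `K` inside the d-graph on `Fin n` with usual edges
`U` and dummy edges `D`. -/
def dCopyCount {V : Type*} [DecidableEq V] (K : DGraph V) {n : ℕ}
    (U : Finset (Sym2 (Fin n))) (D : Finset (FGraph (Fin n))) : ℕ :=
  Nat.card {L : DGraph (Fin n) // L.2.1 ⊆ U ∧ L.2.2 ⊆ D ∧ DGraph.IsoTo K L}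

/-- Union of two d-graphs. -/
def DGraph.union {V : Type*} [DecidableEq V] (K L : DGraph V) : DGraph V :=
  (K.1 ∪ L.1, K.2.1 ∪ L.2.1, K.2.2 ∪ L.2.2)

/-- `G` is the clean d-cycle corresponding to the clean `F`-cycle `C`: the shadow graph of
`C` if `C` is dense, together with the dummy edge `C` if `C` is sparse. -/
def IsCleanDCycleOf {r : ℕ} {V : Type*} [DecidableEq V] (F : SimpleGraph (Fin r))
    (G : DGraph V) (C : FGraph V) : Prop :=
  (IsCleanCycle F C ∧ ¬IsSparse F C ∧ G = (C.1, shadowEdges C, (∅ : Finset (FGraph V)))) ∨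
  (IsSparse F C ∧ G = (C.1, shadowEdges C, ({C} : Finset (FGraph V))))


set_option linter.unusedSectionVars false
set_option linter.unusedVariables false
set_option maxHeartbeats 1000000

section Aux

variable {r : ℕ} {V : Type*} [DecidableEq V] {F : SimpleGraph (Fin r)} {h : FEdge V}

lemma copy_card_fst (hc : h.IsCopyOf F) : h.1.card = r := by
  obtain ⟨φ, hinj, hV, hE⟩ := hc
  have : (↑h.1 : Set V).ncard = r := by
    rw [hV, ← Set.image_univ, Set.ncard_image_of_injective _ hinj, Set.ncard_univ]
    simp
  rwa [Set.ncard_coe_finset] at this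

lemma copy_card_snd (hc : h.IsCopyOf F) : h.2.card = edgeCnt F := by
  obtain ⟨φ, hinj, hV, hE⟩ := hc
  have : (↑h.2 : Set (Sym2 V)).ncard = edgeCnt F := by
    rw [hE, Set.ncard_image_of_injective _ (Sym2.map.injective hinj)]
    rfl
  rwa [Set.ncard_coe_finset] at this

lemma copy_endpoints (hc : h.IsCopyOf F) {e : Sym2 V} (he : e ∈ h.2) {x : V}
    (hx : x ∈ e) : x ∈ h.1 := by
  obtain ⟨φ, hinj, hV, hE⟩ := hc
  have : e ∈ (↑h.2 : Set (Sym2 V)) := he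
  rw [hE] at this
  obtain ⟨e₀, he₀, rfl⟩ := this
  rw [Sym2.mem_map] at hx
  obtain ⟨y, hy, rfl⟩ := hx
  have : φ y ∈ (↑h.1 : Set V) := by rw [hV]; exact ⟨y, rfl⟩
  exact this

lemma copy_not_isDiag (hc : h.IsCopyOf F) {e : Sym2 V} (he : e ∈ h.2) : ¬e.IsDiag := by
  obtain ⟨φ, hinj, hV, hE⟩ := hc
  have : e ∈ (↑h.2 : Set (Sym2 V)) := he
  rw [hE] at this
  obtain ⟨e₀, he₀, rfl⟩ := this
  rw [Sym2.isDiag_map hinj]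
  exact (SimpleGraph.not_isDiag_of_mem_edgeSet F he₀)

lemma copy_density (hr : 3 ≤ r) (hF : Strictly1Balanced F) (hc : h.IsCopyOf F)
    {W' : Finset V} {E'' : Finset (Sym2 V)} (hW' : W' ⊆ h.1) (hE'' : E'' ⊆ h.2)
    (hend : ∀ e ∈ E'', ∀ x ∈ e, x ∈ W') (hne : 1 ≤ E''.card) :
    2 ≤ W'.card ∧ ((E''.card : ℝ) ≤ d1 F * ((W'.card : ℝ) - 1)) ∧
      (¬(W'.card = r ∧ E''.card = edgeCnt F) →
        (E''.card : ℝ) < d1 F * ((W'.card : ℝ) - 1)) := by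
  obtain ⟨φ, hinj, hV, hE⟩ := hc
  have hsubrange : (↑W' : Set V) ⊆ Set.range φ := by
    rw [← hV]; exact fun x hx => hW' hx
  set S : F.Subgraph :=
    { verts := φ ⁻¹' ↑W'
      Adj := fun u v => F.Adj u v ∧ Sym2.map φ s(u, v) ∈ E''
      adj_sub := fun hadj => hadj.1
      edge_vert := fun {u v} hadj => by
        have := hend _ hadj.2 (φ u) (by simp [Sym2.map_pair_eq])
        simpa using this
      symm := ⟨fun u v hadj => ⟨hadj.1.symm, by
        have : s(v, u) = s(u, v) := Sym2.eq_swap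
        rw [this]; exact hadj.2⟩⟩ } with hS
  have hverts : S.verts.ncard = W'.card := by
    have himg : φ '' (φ ⁻¹' ↑W') = ↑W' := Set.image_preimage_eq_of_subset hsubrange
    have := Set.ncard_image_of_injective (φ ⁻¹' (↑W' : Set V)) hinj
    rw [himg, Set.ncard_coe_finset] at this
    exact this.symm
  have himgE : Sym2.map φ '' S.edgeSet = ↑E'' := by
    apply Set.Subset.antisymm
    · rintro e ⟨e₀, he₀, rfl⟩
      induction e₀ with
      | _ u v => exact (SimpleGraph.Subgraph.mem_edgeSet.mp he₀).2
    · intro e he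
      have heh : e ∈ (↑h.2 : Set (Sym2 V)) := hE'' he
      rw [hE] at heh
      obtain ⟨e₀, he₀, rfl⟩ := heh
      refine ⟨e₀, ?_, rfl⟩
      induction e₀ with
      | _ u v => exact SimpleGraph.Subgraph.mem_edgeSet.mpr ⟨he₀, he⟩
  have hedges : S.edgeSet.ncard = E''.card := by
    have := Set.ncard_image_of_injective S.edgeSet (Sym2.map.injective hinj)
    rw [himgE, Set.ncard_coe_finset] at this
    exact this.symm
  have hW2 : 2 ≤ W'.card := by
    rw [← hverts]
    obtain ⟨e, he⟩ := Finset.card_pos.mp hne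
    have heh : e ∈ (↑h.2 : Set (Sym2 V)) := hE'' he
    rw [hE] at heh
    obtain ⟨e₀, he₀, rfl⟩ := heh
    induction e₀ with
    | _ u v =>
      have hadj : S.Adj u v := ⟨he₀, he⟩
      have h1 : u ∈ S.verts := S.edge_vert hadj
      have h2 : v ∈ S.verts := S.edge_vert hadj.symm
      have hne' : u ≠ v := (S.adj_sub hadj).ne
      rw [show (2 : ℕ) = 1 + 1 from rfl]
      exact Nat.succ_le_of_lt ((Set.one_lt_ncard_iff S.verts.toFinite).mpr ⟨u, v, h1, h2, hne'⟩)
  refine ⟨hW2, ?_⟩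
  have hr1 : (0 : ℝ) < (W'.card : ℝ) - 1 := by
    have : (2 : ℝ) ≤ (W'.card : ℝ) := by exact_mod_cast hW2
    linarith
  by_cases hTop : S = ⊤
  · have hv : W'.card = r := by
      rw [← hverts, hTop]
      simp [Set.ncard_univ]
    have he : E''.card = edgeCnt F := by
      rw [← hedges, hTop]
      simp [SimpleGraph.Subgraph.edgeSet_top]
      rfl
    have heq : (E''.card : ℝ) = d1 F * ((W'.card : ℝ) - 1) := by
      rw [hv, he, d1]
      have : ((r : ℝ) - 1) ≠ 0 := by
        have : (3 : ℝ) ≤ (r : ℝ) := by exact_mod_cast hr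
        linarith
      field_simp
    exact ⟨le_of_eq heq, fun hcon => absurd ⟨hv, he⟩ hcon⟩
  · have hlt := hF S hTop (by rw [hverts]; exact hW2) (by rw [hedges]; exact hne)
    rw [hverts, hedges] at hlt
    have : (E''.card : ℝ) < d1 F * ((W'.card : ℝ) - 1) :=
      (div_lt_iff₀ hr1).mp hlt
    exact ⟨le_of_lt this, fun _ => this⟩

lemma double_count {k : ℕ} (h : Fin k → FEdge V) (W : Finset V) (I : Finset (Fin k)) :
    ∑ i ∈ I, (W ∩ (h i).1).card = ∑ x ∈ W, (I.filter fun i => x ∈ (h i).1).card := by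
  have h1 : ∀ i, (W ∩ (h i).1).card = ∑ x ∈ W, if x ∈ (h i).1 then 1 else 0 := by
    intro i
    rw [← Finset.filter_mem_eq_inter]
    exact Finset.card_filter _ _
  have h2 : ∀ x, (I.filter fun i => x ∈ (h i).1).card
      = ∑ i ∈ I, if x ∈ (h i).1 then 1 else 0 := by
    intro x; exact Finset.card_filter _ _
  simp only [h1, h2]
  exact Finset.sum_comm

lemma main_count (hr : 3 ≤ r) (hF : Strictly1Balanced F)
    {k : ℕ} (hk : 2 ≤ k) (h : Fin k → FEdge V)
    {Vset : Finset V} (hVset : Vset = Finset.univ.sup fun i => (h i).1)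
    {Eset : Finset (Sym2 V)} (hEset : Eset = Finset.univ.sup fun i => (h i).2)
    (H1 : ∀ i, (h i).IsCopyOf F)
    (H2 : ∀ i j : Fin k, i ≠ j → Disjoint (h i).2 (h j).2)
    (H3 : ∀ x : V, (Finset.univ.filter fun i => x ∈ (h i).1).card ≤ 2)
    (H4 : (Vset.filter fun x => (Finset.univ.filter fun i => x ∈ (h i).1).card = 2).card = k)
    (H5 : ∀ I : Finset (Fin k), I ≠ Finset.univ →
      (Vset.filter fun x => 2 ≤ (I.filter fun i => x ∈ (h i).1).card).card ≤ I.card - 1) :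
    Eset.card = k * edgeCnt F ∧ Vset.card = k * (r - 1) ∧
    (∀ (W : Finset V) (E' : Finset (Sym2 V)), W ⊆ Vset → E' ⊆ Eset →
      (∀ e ∈ E', ∀ x ∈ e, x ∈ W) → ¬(W = Vset ∧ E' = Eset) → 1 ≤ E'.card →
      (E'.card : ℝ) < d1 F * (W.card : ℝ)) := by
  have hEbi : Eset = Finset.univ.biUnion fun i => (h i).2 := by
    rw [hEset, Finset.sup_eq_biUnion]
  have hVbi : Vset = Finset.univ.biUnion fun i => (h i).1 := by
    rw [hVset, Finset.sup_eq_biUnion]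
  -- (c1)
  have c1 : Eset.card = k * edgeCnt F := by
    rw [hEbi, Finset.card_biUnion (fun i _ j _ hij => H2 i j hij)]
    rw [Finset.sum_congr rfl fun i _ => copy_card_snd (H1 i)]
    simp [Finset.card_univ, mul_comm]
  -- (c2)
  have hdc := double_count h Vset Finset.univ
  have hfull : ∀ i, Vset ∩ (h i).1 = (h i).1 := by
    intro i
    apply Finset.inter_eq_right.mpr
    rw [hVset]; exact Finset.le_sup (f := fun i => (h i).1) (Finset.mem_univ i)
  have hdeg1 : ∀ x ∈ Vset, 1 ≤ (Finset.univ.filter fun i => x ∈ (h i).1).card := by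
    intro x hx
    rw [hVbi, Finset.mem_biUnion] at hx
    obtain ⟨i, _, hxi⟩ := hx
    exact Finset.card_pos.mpr ⟨i, Finset.mem_filter.mpr ⟨Finset.mem_univ i, hxi⟩⟩
  have hsum2 : ∑ x ∈ Vset, (Finset.univ.filter fun i => x ∈ (h i).1).card
      = Vset.card + k := by
    have : ∀ x ∈ Vset, (Finset.univ.filter fun i => x ∈ (h i).1).card
        = 1 + (if (Finset.univ.filter fun i => x ∈ (h i).1).card = 2 then 1 else 0) := by
      intro x hx
      have h1 := hdeg1 x hx
      have h2 := H3 x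
      split_ifs with hh <;> omega
    rw [Finset.sum_congr rfl this, Finset.sum_add_distrib]
    simp only [Finset.sum_const, smul_eq_mul, mul_one]
    rw [← Finset.card_filter, H4]
  have hkr : k * r = Vset.card + k := by
    rw [← hsum2, ← hdc]
    rw [Finset.sum_congr rfl fun i _ => by rw [hfull i, copy_card_fst (H1 i)]]
    simp [Finset.card_univ, mul_comm]
  have c2 : Vset.card = k * (r - 1) := by
    have h9 : r - 1 + 1 = r := by omega
    have : k * (r - 1) + k = k * r := by
      calc k * (r - 1) + k = k * (r - 1 + 1) := by ring
        _ = k * r := by rw [h9]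
    omega
  refine ⟨c1, c2, ?_⟩
  intro W E' hWsub hEsub hend hproper hE1
  classical
  set I : Finset (Fin k) := Finset.univ.filter fun i => 1 ≤ (E' ∩ (h i).2).card with hI
  -- edge decomposition
  have hE'bi : E' = Finset.univ.biUnion fun i => E' ∩ (h i).2 := by
    apply Finset.Subset.antisymm
    · intro e he
      have := hEsub he
      rw [hEbi, Finset.mem_biUnion] at this
      obtain ⟨i, _, hi⟩ := this
      exact Finset.mem_biUnion.mpr ⟨i, Finset.mem_univ i, Finset.mem_inter.mpr ⟨he, hi⟩⟩
    · intro e he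
      rw [Finset.mem_biUnion] at he
      obtain ⟨i, _, hi⟩ := he
      exact (Finset.mem_inter.mp hi).1
  have hEcard : E'.card = ∑ i ∈ I, (E' ∩ (h i).2).card := by
    conv_lhs => rw [hE'bi]
    rw [Finset.card_biUnion (fun i _ j _ hij =>
      Finset.disjoint_of_subset_left Finset.inter_subset_right
        (Finset.disjoint_of_subset_right Finset.inter_subset_right (H2 i j hij)))]
    rw [← Finset.sum_filter_of_ne (p := fun i => 1 ≤ (E' ∩ (h i).2).card)]
    intro i _ hne
    omega
  have hInonempty : I.Nonempty := by
    by_contra hcon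
    rw [Finset.not_nonempty_iff_eq_empty] at hcon
    rw [hcon, Finset.sum_empty] at hEcard
    omega
  -- per-edge inequalities
  have hDens : ∀ i ∈ I, 2 ≤ (W ∩ (h i).1).card ∧
      (((E' ∩ (h i).2).card : ℝ) ≤ d1 F * (((W ∩ (h i).1).card : ℝ) - 1)) ∧
      (¬((W ∩ (h i).1).card = r ∧ (E' ∩ (h i).2).card = edgeCnt F) →
        ((E' ∩ (h i).2).card : ℝ) < d1 F * (((W ∩ (h i).1).card : ℝ) - 1)) := by
    intro i hi
    have hie : 1 ≤ (E' ∩ (h i).2).card := (Finset.mem_filter.mp hi).2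
    refine copy_density hr hF (H1 i) Finset.inter_subset_right Finset.inter_subset_right
      ?_ hie
    intro e he x hx
    have h1 := hend e (Finset.mem_inter.mp he).1 x hx
    have h2 := copy_endpoints (H1 i) (Finset.mem_inter.mp he).2 hx
    exact Finset.mem_inter.mpr ⟨h1, h2⟩
  -- vertex counting
  have hdcI := double_count h W I
  have hdegI : ∀ x, (I.filter fun i => x ∈ (h i).1).card ≤ 2 := by
    intro x
    calc (I.filter fun i => x ∈ (h i).1).card
        ≤ (Finset.univ.filter fun i => x ∈ (h i).1).card :=
          Finset.card_le_card (Finset.filter_subset_filter _ (Finset.subset_univ I))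
      _ ≤ 2 := H3 x
  have hvsum : ∑ i ∈ I, (W ∩ (h i).1).card ≤ W.card +
      (W.filter fun x => 2 ≤ (I.filter fun i => x ∈ (h i).1).card).card := by
    rw [hdcI]
    have : ∀ x ∈ W, (I.filter fun i => x ∈ (h i).1).card ≤
        1 + (if 2 ≤ (I.filter fun i => x ∈ (h i).1).card then 1 else 0) := by
      intro x _
      have := hdegI x
      split_ifs with hh <;> omega
    calc ∑ x ∈ W, (I.filter fun i => x ∈ (h i).1).card
        ≤ ∑ x ∈ W, (1 + (if 2 ≤ (I.filter fun i => x ∈ (h i).1).card then 1 else 0)) :=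
          Finset.sum_le_sum this
      _ = W.card + (W.filter fun x => 2 ≤ (I.filter fun i => x ∈ (h i).1).card).card := by
          rw [Finset.sum_add_distrib]
          simp only [Finset.sum_const, smul_eq_mul, mul_one]
          rw [← Finset.card_filter]
  have hDW : (W.filter fun x => 2 ≤ (I.filter fun i => x ∈ (h i).1).card).card ≤
      (Vset.filter fun x => 2 ≤ (I.filter fun i => x ∈ (h i).1).card).card :=
    Finset.card_le_card (Finset.filter_subset_filter _ hWsub)
  have hdbound : (W.filter fun x => 2 ≤ (I.filter fun i => x ∈ (h i).1).card).card ≤ I.card := by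
    by_cases hIuniv : I = Finset.univ
    · refine le_trans hDW ?_
      rw [hIuniv, Finset.card_univ, Fintype.card_fin]
      rw [show (Vset.filter fun x =>
          2 ≤ (Finset.univ.filter fun i => x ∈ (h i).1).card) =
          (Vset.filter fun x =>
          (Finset.univ.filter fun i => x ∈ (h i).1).card = 2) from ?_]
      · rw [H4]
      · apply Finset.filter_congr
        intro x _
        have := H3 x
        constructor <;> (intro; omega)
    · exact le_trans (le_trans hDW (H5 I hIuniv)) (Nat.sub_le _ _)
  have hW0 : (0 : ℝ) < (W.card : ℝ) := by
    obtain ⟨e, he⟩ := Finset.card_pos.mp hE1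
    have : e.out.1 ∈ e := Sym2.out_fst_mem e
    have hxW := hend e he _ this
    exact_mod_cast Finset.card_pos.mpr ⟨_, hxW⟩
  have hr1R : (0 : ℝ) < (r : ℝ) - 1 := by
    have : (3 : ℝ) ≤ (r : ℝ) := by exact_mod_cast hr
    linarith
  by_cases hall : ∀ i ∈ I, (W ∩ (h i).1).card = r ∧ (E' ∩ (h i).2).card = edgeCnt F
  · by_cases hIuniv : I = Finset.univ
    · -- contradiction with properness
      exfalso
      apply hproper
      constructor
      · apply Finset.Subset.antisymm hWsub
        intro x hx
        rw [hVbi, Finset.mem_biUnion] at hx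
        obtain ⟨i, _, hxi⟩ := hx
        have h1 := (hall i (hIuniv ▸ Finset.mem_univ i)).1
        have h2 : W ∩ (h i).1 = (h i).1 :=
          Finset.eq_of_subset_of_card_le Finset.inter_subset_right
            (by rw [h1, copy_card_fst (H1 i)])
        exact Finset.inter_subset_left (h2 ▸ hxi)
      · apply Finset.Subset.antisymm hEsub
        intro e he
        rw [hEbi, Finset.mem_biUnion] at he
        obtain ⟨i, _, hei⟩ := he
        have h1 := (hall i (hIuniv ▸ Finset.mem_univ i)).2
        have h2 : E' ∩ (h i).2 = (h i).2 :=
          Finset.eq_of_subset_of_card_le Finset.inter_subset_right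
            (by rw [h1, copy_card_snd (H1 i)])
        exact Finset.inter_subset_left (h2 ▸ hei)
    · -- B2: all full, I proper
      set m := I.card with hm
      have hm1 : 1 ≤ m := Finset.card_pos.mpr hInonempty
      have hE'm : E'.card = m * edgeCnt F := by
        rw [hEcard, Finset.sum_congr rfl fun i hi => (hall i hi).2]
        simp [mul_comm, hm]
      have hvsum' : ∑ i ∈ I, (W ∩ (h i).1).card = m * r := by
        rw [Finset.sum_congr rfl fun i hi => (hall i hi).1]
        simp [mul_comm, hm]
      have hWlb : m * (r - 1) + 1 ≤ W.card := by
        have h5 := le_trans hDW (H5 I hIuniv)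
        have : m * r ≤ W.card + (m - 1) := by
          rw [← hvsum']
          exact le_trans hvsum (by omega)
        have h9 : r - 1 + 1 = r := by omega
        have hmr : m * (r - 1) + m = m * r := by
          calc m * (r - 1) + m = m * (r - 1 + 1) := by ring
            _ = m * r := by rw [h9]
        omega
      have heF1 : 1 ≤ edgeCnt F := by
        obtain ⟨i, hi⟩ := hInonempty
        have h1 := (Finset.mem_filter.mp hi).2
        have h2 := (hall i hi).2
        omega
      -- numeric
      rw [d1]
      rw [div_mul_eq_mul_div, lt_div_iff₀ hr1R]
      have hcast1 : (E'.card : ℝ) = (m : ℝ) * (edgeCnt F : ℝ) := by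
        rw [hE'm]; push_cast; ring
      have hcast2 : ((m * (r - 1) + 1 : ℕ) : ℝ) ≤ (W.card : ℝ) := by exact_mod_cast hWlb
      have hcast3 : ((m * (r - 1) + 1 : ℕ) : ℝ) = (m : ℝ) * ((r : ℝ) - 1) + 1 := by
        push_cast [Nat.cast_sub (by omega : 1 ≤ r)]
        ring
      rw [hcast1]
      have heF1R : (1 : ℝ) ≤ (edgeCnt F : ℝ) := by exact_mod_cast heF1
      nlinarith [hcast2, hcast3]
  · -- case A: some non-full index
    push_neg at hall
    obtain ⟨i₀, hi₀, hi₀ne⟩ := hall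
    have hstrict : (∑ i ∈ I, ((E' ∩ (h i).2).card : ℝ)) <
        ∑ i ∈ I, d1 F * (((W ∩ (h i).1).card : ℝ) - 1) := by
      apply Finset.sum_lt_sum
      · intro i hi; exact (hDens i hi).2.1
      · exact ⟨i₀, hi₀, (hDens i₀ hi₀).2.2 (by
          intro hcon
          exact hi₀ne hcon.1 hcon.2)⟩
    have hsumeq : (E'.card : ℝ) = ∑ i ∈ I, ((E' ∩ (h i).2).card : ℝ) := by
      rw [hEcard]; push_cast; rfl
    have hd1nn : 0 ≤ d1 F := by
      rw [d1]
      positivity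
    have hrhs : ∑ i ∈ I, d1 F * (((W ∩ (h i).1).card : ℝ) - 1) ≤ d1 F * (W.card : ℝ) := by
      rw [← Finset.mul_sum]
      apply mul_le_mul_of_nonneg_left _ hd1nn
      have : ∑ i ∈ I, (((W ∩ (h i).1).card : ℝ) - 1) =
          ((∑ i ∈ I, (W ∩ (h i).1).card : ℕ) : ℝ) - (I.card : ℝ) := by
        rw [Finset.sum_sub_distrib]
        simp [Nat.cast_sum]
      rw [this]
      have h1 : (∑ i ∈ I, (W ∩ (h i).1).card : ℕ) ≤ W.card + I.card :=
        le_trans hvsum (by omega)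
      have := (Nat.cast_le (α := ℝ)).mpr h1
      push_cast at this ⊢
      linarith
    calc (E'.card : ℝ) < _ := hsumeq ▸ hstrict
      _ ≤ d1 F * (W.card : ℝ) := hrhs

section Cycle3
variable {k : ℕ} {h : Fin k → FEdge V} {v : Fin k → V}

private def nxt (hk : 0 < k) : Fin k → Fin k := fun i => ⟨((i : ℕ) + 1) % k, Nat.mod_lt _ hk⟩

lemma nxt_ne (hk3 : 3 ≤ k) (i : Fin k) : nxt (by omega) i ≠ i := by
  intro hcon
  have hval : ((i : ℕ) + 1) % k = (i : ℕ) := congrArg Fin.val hcon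
  have hik := i.isLt
  rcases Nat.lt_or_ge ((i : ℕ) + 1) k with hlt | hge
  · rw [Nat.mod_eq_of_lt hlt] at hval; omega
  · have h1 : (i : ℕ) + 1 = k := by omega
    rw [h1, Nat.mod_self] at hval; omega

lemma nxt_inj (hk3 : 3 ≤ k) : Function.Injective (nxt (k := k) (by omega)) := by
  intro i j hij
  have hval : ((i : ℕ) + 1) % k = ((j : ℕ) + 1) % k := congrArg Fin.val hij
  have hik := i.isLt
  have hjk := j.isLt
  apply Fin.ext
  rcases Nat.lt_or_ge ((i : ℕ) + 1) k with hi | hi <;>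
    rcases Nat.lt_or_ge ((j : ℕ) + 1) k with hj | hj
  · rw [Nat.mod_eq_of_lt hi, Nat.mod_eq_of_lt hj] at hval; omega
  · have : (j : ℕ) + 1 = k := by omega
    rw [Nat.mod_eq_of_lt hi, this, Nat.mod_self] at hval; omega
  · have : (i : ℕ) + 1 = k := by omega
    rw [Nat.mod_eq_of_lt hj, this, Nat.mod_self] at hval; omega
  · omega

lemma nxt_iter_val (hk : 0 < k) (j : ℕ) (i : Fin k) :
    (((nxt hk)^[j]) i : ℕ) = ((i : ℕ) + j) % k := by
  induction j with
  | zero => simp [Nat.mod_eq_of_lt i.isLt]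
  | succ n ih =>
    rw [Function.iterate_succ_apply']
    show ((((nxt hk)^[n]) i : ℕ) + 1) % k = _
    rw [ih, Nat.mod_add_mod, ← Nat.add_assoc]

lemma mem_pair (hk3 : 3 ≤ k)
    (hcons : ∀ i j : Fin k, ((i : ℕ) + 1) % k = (j : ℕ) → (h i).1 ∩ (h j).1 = {v i})
    (hnon : ∀ i j : Fin k, i ≠ j → ((i : ℕ) + 1) % k ≠ (j : ℕ) →
      ((j : ℕ) + 1) % k ≠ (i : ℕ) → (h i).1 ∩ (h j).1 = ∅)
    {x : V} {i j : Fin k} (hij : i ≠ j) (hxi : x ∈ (h i).1) (hxj : x ∈ (h j).1) :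
    (j = nxt (by omega) i ∧ x = v i) ∨ (i = nxt (by omega) j ∧ x = v j) := by
  by_cases h1 : j = nxt (by omega : 0 < k) i
  · left
    refine ⟨h1, ?_⟩
    have := hcons i j (by rw [h1]; rfl)
    have hx : x ∈ (h i).1 ∩ (h j).1 := Finset.mem_inter.mpr ⟨hxi, hxj⟩
    rw [this, Finset.mem_singleton] at hx
    exact hx
  · by_cases h2 : i = nxt (by omega : 0 < k) j
    · right
      refine ⟨h2, ?_⟩
      have := hcons j i (by rw [h2]; rfl)
      have hx : x ∈ (h j).1 ∩ (h i).1 := Finset.mem_inter.mpr ⟨hxj, hxi⟩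
      rw [this, Finset.mem_singleton] at hx
      exact hx
    · exfalso
      have hempty := hnon i j hij
        (fun hval => h1 (Fin.ext hval.symm)) (fun hval => h2 (Fin.ext hval.symm))
      have hx : x ∈ (h i).1 ∩ (h j).1 := Finset.mem_inter.mpr ⟨hxi, hxj⟩
      rw [hempty] at hx
      exact absurd hx (Finset.notMem_empty x)

lemma v_mem (hk3 : 3 ≤ k)
    (hcons : ∀ i j : Fin k, ((i : ℕ) + 1) % k = (j : ℕ) → (h i).1 ∩ (h j).1 = {v i})
    (a : Fin k) : v a ∈ (h a).1 ∧ v a ∈ (h (nxt (by omega) a)).1 := by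
  have := hcons a (nxt (by omega : 0 < k) a) rfl
  have hx : v a ∈ (h a).1 ∩ (h (nxt (by omega : 0 < k) a)).1 := by
    rw [this]; exact Finset.mem_singleton_self _
  exact Finset.mem_inter.mp hx

lemma mem_of_eq_v (hk3 : 3 ≤ k) (hvinj : Function.Injective v)
    (hcons : ∀ i j : Fin k, ((i : ℕ) + 1) % k = (j : ℕ) → (h i).1 ∩ (h j).1 = {v i})
    (hnon : ∀ i j : Fin k, i ≠ j → ((i : ℕ) + 1) % k ≠ (j : ℕ) →
      ((j : ℕ) + 1) % k ≠ (i : ℕ) → (h i).1 ∩ (h j).1 = ∅)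
    {a c : Fin k} (hxc : v a ∈ (h c).1) : c = a ∨ c = nxt (by omega) a := by
  by_contra hcon
  push_neg at hcon
  obtain ⟨hca, hcnxt⟩ := hcon
  have hxa := (v_mem hk3 hcons a).1
  rcases mem_pair hk3 hcons hnon (Ne.symm hca) hxa hxc with ⟨h1, _⟩ | ⟨_, h2⟩
  · exact hcnxt h1
  · exact hca (hvinj h2).symm

lemma deg_le_two (hk3 : 3 ≤ k) (hvinj : Function.Injective v)
    (hcons : ∀ i j : Fin k, ((i : ℕ) + 1) % k = (j : ℕ) → (h i).1 ∩ (h j).1 = {v i})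
    (hnon : ∀ i j : Fin k, i ≠ j → ((i : ℕ) + 1) % k ≠ (j : ℕ) →
      ((j : ℕ) + 1) % k ≠ (i : ℕ) → (h i).1 ∩ (h j).1 = ∅)
    (x : V) : (Finset.univ.filter fun i => x ∈ (h i).1).card ≤ 2 := by
  set s := Finset.univ.filter fun i => x ∈ (h i).1 with hs
  by_cases h1 : s.card ≤ 1
  · omega
  · have h2 : 1 < s.card := by omega
    obtain ⟨i, hi, j, hj, hij⟩ := Finset.one_lt_card.mp h2
    have hxi : x ∈ (h i).1 := (Finset.mem_filter.mp hi).2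
    have hxj : x ∈ (h j).1 := (Finset.mem_filter.mp hj).2
    have key : ∃ a : Fin k, x = v a := by
      rcases mem_pair hk3 hcons hnon hij hxi hxj with ⟨_, hxa⟩ | ⟨_, hxa⟩
      exacts [⟨i, hxa⟩, ⟨j, hxa⟩]
    obtain ⟨a, rfl⟩ := key
    have hsub : s ⊆ {a, nxt (by omega : 0 < k) a} := by
      intro c hc
      have hxc : v a ∈ (h c).1 := (Finset.mem_filter.mp hc).2
      rcases mem_of_eq_v hk3 hvinj hcons hnon hxc with h | h <;>
        simp [h]
    calc s.card ≤ ({a, nxt (by omega : 0 < k) a} : Finset (Fin k)).card :=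
          Finset.card_le_card hsub
      _ ≤ 2 := Finset.card_insert_le _ _ |>.trans (by simp)

lemma deg_two_set (hk3 : 3 ≤ k) (hvinj : Function.Injective v)
    (hcons : ∀ i j : Fin k, ((i : ℕ) + 1) % k = (j : ℕ) → (h i).1 ∩ (h j).1 = {v i})
    (hnon : ∀ i j : Fin k, i ≠ j → ((i : ℕ) + 1) % k ≠ (j : ℕ) →
      ((j : ℕ) + 1) % k ≠ (i : ℕ) → (h i).1 ∩ (h j).1 = ∅)
    {Vset : Finset V} (hVset : Vset = Finset.univ.sup fun i => (h i).1) :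
    (Vset.filter fun x => (Finset.univ.filter fun i => x ∈ (h i).1).card = 2).card = k := by
  have hset : (Vset.filter fun x => (Finset.univ.filter fun i => x ∈ (h i).1).card = 2)
      = Finset.image v Finset.univ := by
    ext x
    simp only [Finset.mem_filter, Finset.mem_image, Finset.mem_univ, true_and]
    constructor
    · rintro ⟨hxV, hdeg⟩
      have h2 : 1 < (Finset.univ.filter fun i => x ∈ (h i).1).card := by omega
      obtain ⟨i, hi, j, hj, hij⟩ := Finset.one_lt_card.mp h2
      have hxi : x ∈ (h i).1 := (Finset.mem_filter.mp hi).2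
      have hxj : x ∈ (h j).1 := (Finset.mem_filter.mp hj).2
      rcases mem_pair hk3 hcons hnon hij hxi hxj with ⟨_, hxa⟩ | ⟨_, hxa⟩
      exacts [⟨i, hxa.symm⟩, ⟨j, hxa.symm⟩]
    · rintro ⟨a, rfl⟩
      have hm := v_mem hk3 hcons a
      constructor
      · rw [hVset, Finset.mem_sup]
        exact ⟨a, Finset.mem_univ a, hm.1⟩
      · have hle := deg_le_two hk3 hvinj hcons hnon (v a)
        have hlt : 1 < (Finset.univ.filter fun i => v a ∈ (h i).1).card :=
          Finset.one_lt_card.mpr ⟨a, Finset.mem_filter.mpr ⟨Finset.mem_univ _, hm.1⟩,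
            nxt (by omega : 0 < k) a,
            Finset.mem_filter.mpr ⟨Finset.mem_univ _, hm.2⟩, (nxt_ne hk3 a).symm⟩
        omega
  rw [hset, Finset.card_image_of_injective _ hvinj, Finset.card_univ, Fintype.card_fin]

lemma broken_cycle (hk3 : 3 ≤ k) {I : Finset (Fin k)} (hIne : I ≠ Finset.univ)
    (hInonempty : I.Nonempty) :
    ∃ c ∈ I, ∀ a ∈ I, nxt (by omega : 0 < k) a ≠ c := by
  by_contra hcon
  push_neg at hcon
  apply hIne
  obtain ⟨c0, hc0⟩ := hInonempty
  have chain : ∀ j : ℕ, ∃ c ∈ I, (nxt (by omega : 0 < k))^[j] c = c0 := by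
    intro j
    induction j with
    | zero => exact ⟨c0, hc0, rfl⟩
    | succ n ih =>
      obtain ⟨c, hcI, hc⟩ := ih
      obtain ⟨a, haI, ha⟩ := hcon c hcI
      exact ⟨a, haI, by rw [Function.iterate_succ_apply, ha, hc]⟩
  apply Finset.eq_univ_of_forall
  intro b
  set j : ℕ := k + (c0 : ℕ) - (b : ℕ) with hj
  obtain ⟨c, hcI, hc⟩ := chain j
  have hbj : (nxt (by omega : 0 < k))^[j] b = c0 := by
    apply Fin.ext
    rw [nxt_iter_val]
    have hb := b.isLt
    have : (b : ℕ) + j = k + (c0 : ℕ) := by omega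
    rw [this, Nat.add_comm k, Nat.add_mod_right, Nat.mod_eq_of_lt c0.isLt]
  have : b = c := Function.Injective.iterate (nxt_inj hk3) j (by rw [hbj, hc])
  rw [this]; exact hcI

lemma H5_cycle3 (hk3 : 3 ≤ k) (hvinj : Function.Injective v)
    (hcons : ∀ i j : Fin k, ((i : ℕ) + 1) % k = (j : ℕ) → (h i).1 ∩ (h j).1 = {v i})
    (hnon : ∀ i j : Fin k, i ≠ j → ((i : ℕ) + 1) % k ≠ (j : ℕ) →
      ((j : ℕ) + 1) % k ≠ (i : ℕ) → (h i).1 ∩ (h j).1 = ∅)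
    (Vset : Finset V) (I : Finset (Fin k)) (hIne : I ≠ Finset.univ) :
    (Vset.filter fun x => 2 ≤ (I.filter fun i => x ∈ (h i).1).card).card ≤ I.card - 1 := by
  rcases Finset.eq_empty_or_nonempty I with rfl | hInonempty
  · simp
  obtain ⟨c, hcI, hc⟩ := broken_cycle hk3 hIne hInonempty
  set A : Finset (Fin k) := I.filter fun a => nxt (by omega : 0 < k) a ∈ I with hA
  have hDsub : (Vset.filter fun x => 2 ≤ (I.filter fun i => x ∈ (h i).1).card)
      ⊆ A.image v := by
    intro x hx
    have h2 : 1 < (I.filter fun i => x ∈ (h i).1).card := (Finset.mem_filter.mp hx).2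
    obtain ⟨i, hi, j, hj, hij⟩ := Finset.one_lt_card.mp h2
    have hiI : i ∈ I := (Finset.mem_filter.mp hi).1
    have hjI : j ∈ I := (Finset.mem_filter.mp hj).1
    have hxi : x ∈ (h i).1 := (Finset.mem_filter.mp hi).2
    have hxj : x ∈ (h j).1 := (Finset.mem_filter.mp hj).2
    rcases mem_pair hk3 hcons hnon hij hxi hxj with ⟨hj', hxa⟩ | ⟨hi', hxa⟩
    · exact Finset.mem_image.mpr ⟨i, Finset.mem_filter.mpr ⟨hiI, hj' ▸ hjI⟩, hxa.symm⟩
    · exact Finset.mem_image.mpr ⟨j, Finset.mem_filter.mpr ⟨hjI, hi' ▸ hiI⟩, hxa.symm⟩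
  have hAcard : A.card ≤ (I.erase c).card := by
    apply Finset.card_le_card_of_injOn (fun a => nxt (by omega : 0 < k) a)
    · intro a ha
      have haI := (Finset.mem_filter.mp ha).1
      have hna := (Finset.mem_filter.mp ha).2
      exact Finset.mem_erase.mpr ⟨hc a haI, hna⟩
    · intro a _ b _ hab
      exact nxt_inj hk3 hab
  calc (Vset.filter fun x => 2 ≤ (I.filter fun i => x ∈ (h i).1).card).card
      ≤ (A.image v).card := Finset.card_le_card hDsub
    _ ≤ A.card := Finset.card_image_le
    _ ≤ (I.erase c).card := hAcard
    _ = I.card - 1 := Finset.card_erase_of_mem hcI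

end Cycle3

section Build
variable {k : ℕ}

lemma H2_cycle3 {h : Fin k → FEdge V} {v : Fin k → V} {F : SimpleGraph (Fin r)}
    (hk3 : 3 ≤ k) (H1 : ∀ i, (h i).IsCopyOf F)
    (hcons : ∀ i j : Fin k, ((i : ℕ) + 1) % k = (j : ℕ) → (h i).1 ∩ (h j).1 = {v i})
    (hnon : ∀ i j : Fin k, i ≠ j → ((i : ℕ) + 1) % k ≠ (j : ℕ) →
      ((j : ℕ) + 1) % k ≠ (i : ℕ) → (h i).1 ∩ (h j).1 = ∅)
    (i j : Fin k) (hij : i ≠ j) : Disjoint (h i).2 (h j).2 := by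
  rw [Finset.disjoint_left]
  intro e hei hej
  have hnd := copy_not_isDiag (H1 i) hei
  induction e with
  | _ x y =>
    have hxy : x ≠ y := by rwa [Sym2.mk_isDiag_iff] at hnd
    have hx : x ∈ (h i).1 := copy_endpoints (H1 i) hei (Sym2.mem_mk_left x y)
    have hy : y ∈ (h i).1 := copy_endpoints (H1 i) hei (Sym2.mem_mk_right x y)
    have hx' : x ∈ (h j).1 := copy_endpoints (H1 j) hej (Sym2.mem_mk_left x y)
    have hy' : y ∈ (h j).1 := copy_endpoints (H1 j) hej (Sym2.mem_mk_right x y)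
    have hnn : ∀ a : Fin k, nxt (by omega : 0 < k) (nxt (by omega : 0 < k) a) ≠ a := by
      intro a hcon
      have hval : (((a : ℕ) + 1) % k + 1) % k = (a : ℕ) := congrArg Fin.val hcon
      rw [Nat.mod_add_mod] at hval
      have hak := a.isLt
      rcases Nat.lt_or_ge ((a : ℕ) + 1 + 1) k with hlt | hge
      · rw [Nat.mod_eq_of_lt hlt] at hval; omega
      · have h1 : (a : ℕ) + 1 + 1 - k < k := by omega
        have h2 : ((a : ℕ) + 1 + 1) % k = (a : ℕ) + 1 + 1 - k := by
          rw [Nat.mod_eq_sub_mod (by omega), Nat.mod_eq_of_lt h1]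
        omega
    rcases mem_pair hk3 hcons hnon hij hx hx' with ⟨hj', hxa⟩ | ⟨hi', hxa⟩ <;>
      rcases mem_pair hk3 hcons hnon hij hy hy' with ⟨hj'', hya⟩ | ⟨hi'', hya⟩
    · exact hxy (hxa.trans hya.symm)
    · exact hnn j (by rw [← hi'', ← hj'])
    · exact hnn i (by rw [← hj'', ← hi'])
    · exact hxy (hxa.trans hya.symm)

end Build

section K2
variable {h₁ h₂ : FEdge V} {F : SimpleGraph (Fin r)}

lemma k2_disj (H1a : h₁.IsCopyOf F) (H1b : h₂.IsCopyOf F)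
    (hT : (h₁.1 ∩ h₂.1).card = 2)
    (hnotshare : ∀ x y : V, x ≠ y → h₁.1 ∩ h₂.1 = {x, y} →
      ¬(s(x, y) ∈ h₁.2 ∧ s(x, y) ∈ h₂.2)) :
    Disjoint h₁.2 h₂.2 := by
  rw [Finset.disjoint_left]
  intro e he₁ he₂
  have hnd := copy_not_isDiag H1a he₁
  induction e with
  | _ x y =>
    have hxy : x ≠ y := by rwa [Sym2.mk_isDiag_iff] at hnd
    have hx : x ∈ h₁.1 ∩ h₂.1 := Finset.mem_inter.mpr
      ⟨copy_endpoints H1a he₁ (Sym2.mem_mk_left x y),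
       copy_endpoints H1b he₂ (Sym2.mem_mk_left x y)⟩
    have hy : y ∈ h₁.1 ∩ h₂.1 := Finset.mem_inter.mpr
      ⟨copy_endpoints H1a he₁ (Sym2.mem_mk_right x y),
       copy_endpoints H1b he₂ (Sym2.mem_mk_right x y)⟩
    have hsub : ({x, y} : Finset V) ⊆ h₁.1 ∩ h₂.1 := by
      intro z hz
      rcases Finset.mem_insert.mp hz with rfl | hz
      · exact hx
      · rw [Finset.mem_singleton] at hz; subst hz; exact hy
    have hcardxy : ({x, y} : Finset V).card = 2 := Finset.card_pair hxy
    have hTeq : h₁.1 ∩ h₂.1 = {x, y} :=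
      (Finset.eq_of_subset_of_card_le hsub (by omega)).symm
    exact hnotshare x y hxy hTeq ⟨he₁, he₂⟩

lemma k2_H4 (hT : (h₁.1 ∩ h₂.1).card = 2)
    {Vset : Finset V}
    (hVset : Vset = Finset.univ.sup fun i => ((![h₁, h₂] : Fin 2 → FEdge V) i).1) :
    (Vset.filter fun x =>
      (Finset.univ.filter fun i => x ∈ ((![h₁, h₂] : Fin 2 → FEdge V) i).1).card = 2).card
      = 2 := by
  have hset : (Vset.filter fun x =>
      (Finset.univ.filter fun i => x ∈ ((![h₁, h₂] : Fin 2 → FEdge V) i).1).card = 2)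
      = h₁.1 ∩ h₂.1 := by
    ext x
    simp only [Finset.mem_filter, Finset.mem_inter]
    constructor
    · rintro ⟨hxV, hdeg⟩
      have huniv : (Finset.univ.filter fun i => x ∈ ((![h₁, h₂] : Fin 2 → FEdge V) i).1)
          = Finset.univ := by
        apply Finset.eq_univ_of_card
        rw [hdeg, Fintype.card_fin]
      have h0 : (0 : Fin 2) ∈ Finset.univ.filter
          fun i => x ∈ ((![h₁, h₂] : Fin 2 → FEdge V) i).1 := by
        rw [huniv]; exact Finset.mem_univ _
      have h1 : (1 : Fin 2) ∈ Finset.univ.filter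
          fun i => x ∈ ((![h₁, h₂] : Fin 2 → FEdge V) i).1 := by
        rw [huniv]; exact Finset.mem_univ _
      have hx0 := (Finset.mem_filter.mp h0).2
      have hx1 := (Finset.mem_filter.mp h1).2
      simp only [Matrix.cons_val_zero, Matrix.cons_val_one, Matrix.head_cons] at hx0 hx1
      exact ⟨hx0, hx1⟩
    · rintro ⟨hx1, hx2⟩
      constructor
      · rw [hVset, Finset.mem_sup]
        exact ⟨0, Finset.mem_univ _, by simpa using hx1⟩
      · have huniv : (Finset.univ.filter fun i => x ∈ ((![h₁, h₂] : Fin 2 → FEdge V) i).1)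
            = Finset.univ := by
          apply Finset.eq_univ_of_forall
          intro i
          refine Finset.mem_filter.mpr ⟨Finset.mem_univ i, ?_⟩
          fin_cases i <;> simpa using (by assumption : _)
        rw [huniv, Finset.card_univ, Fintype.card_fin]
  rw [hset, hT]

lemma k2_H5 {Vset : Finset V} (I : Finset (Fin 2)) (hIne : I ≠ Finset.univ) :
    (Vset.filter fun x =>
      2 ≤ (I.filter fun i => x ∈ ((![h₁, h₂] : Fin 2 → FEdge V) i).1).card).card
      ≤ I.card - 1 := by
  have hIcard : I.card ≤ 1 := by
    have hle : I.card ≤ 2 := le_trans (Finset.card_le_univ I) (by simp)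
    rcases Nat.lt_or_ge I.card 2 with hlt | hge
    · omega
    · exfalso
      exact hIne (Finset.eq_univ_of_card I (by
        have := Finset.card_le_univ I
        simp only [Finset.card_univ, Fintype.card_fin] at this ⊢
        omega))
  have hempty : (Vset.filter fun x =>
      2 ≤ (I.filter fun i => x ∈ ((![h₁, h₂] : Fin 2 → FEdge V) i).1).card) = ∅ := by
    apply Finset.filter_false_of_mem
    intro x _
    have : (I.filter fun i => x ∈ ((![h₁, h₂] : Fin 2 → FEdge V) i).1).card ≤ I.card :=
      Finset.card_filter_le _ _
    omega
  rw [hempty]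
  simp

end K2

lemma assemble {F : SimpleGraph (Fin r)} (hr : 3 ≤ r) (hF : Strictly1Balanced F)
    {C : Finset V × Finset (FEdge V)} {k : ℕ} (hk : 2 ≤ k) (h : Fin k → FEdge V)
    (hsupV : C.1 = C.2.sup Prod.fst) (hCimg : C.2 = Finset.image h Finset.univ)
    (H1 : ∀ i, (h i).IsCopyOf F)
    (H2 : ∀ i j : Fin k, i ≠ j → Disjoint (h i).2 (h j).2)
    (H3 : ∀ x : V, (Finset.univ.filter fun i => x ∈ (h i).1).card ≤ 2)
    (H4 : (C.1.filter fun x => (Finset.univ.filter fun i => x ∈ (h i).1).card = 2).card = k)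
    (H5 : ∀ I : Finset (Fin k), I ≠ Finset.univ →
      (C.1.filter fun x => 2 ≤ (I.filter fun i => x ∈ (h i).1).card).card ≤ I.card - 1) :
    (shadowEdges C).card = k * edgeCnt F ∧
    C.1.card = k * (r - 1) ∧
    ((shadowEdges C).card : ℝ) / (C.1.card : ℝ) = d1 F ∧
    (∀ (W : Finset V) (E' : Finset (Sym2 V)), W ⊆ C.1 → E' ⊆ shadowEdges C →
      (∀ e ∈ E', ∀ x ∈ e, x ∈ W) → ¬(W = C.1 ∧ E' = shadowEdges C) → 1 ≤ E'.card →
      (E'.card : ℝ) / (W.card : ℝ) < ((shadowEdges C).card : ℝ) / (C.1.card : ℝ)) := by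
  have hVset : C.1 = Finset.univ.sup fun i => (h i).1 := by
    rw [hsupV, hCimg, Finset.sup_image]; rfl
  have hEset : shadowEdges C = Finset.univ.sup fun i => (h i).2 := by
    rw [shadowEdges, hCimg, Finset.sup_image]; rfl
  obtain ⟨c1, c2, c4⟩ := main_count hr hF hk h hVset hEset H1 H2 H3 H4 H5
  have c3 : ((shadowEdges C).card : ℝ) / (C.1.card : ℝ) = d1 F := by
    rw [c1, c2, d1]
    have hk0 : (k : ℝ) ≠ 0 := by positivity
    push_cast [Nat.cast_sub (by omega : 1 ≤ r)]
    rw [mul_div_mul_left _ _ hk0]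
  refine ⟨c1, c2, c3, ?_⟩
  intro W E' hW hE hend hproper hE1
  rw [c3]
  have hW0 : (0 : ℝ) < (W.card : ℝ) := by
    obtain ⟨e, he⟩ := Finset.card_pos.mp hE1
    have hm : e.out.1 ∈ e := Sym2.out_fst_mem e
    have hxW := hend e he _ hm
    exact_mod_cast Finset.card_pos.mpr ⟨_, hxW⟩
  rw [div_lt_iff₀ hW0]
  exact c4 W E' hW hE hend hproper hE1


end Aux

/-- The shadow graph `S` of a dense clean `F`-cycle of length `k ≥ 2`
satisfies `e(S) = k·e(F)`, `v(S) = k(r-1)`, so `e(S)/v(S) = d₁(F)`, and it is strictly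
balanced: every proper subgraph with at least one edge has strictly smaller density. -/
theorem dense_clean_cycle_strictly_balanced {r : ℕ} (hr : 3 ≤ r) (F : SimpleGraph (Fin r))
    (hF : Strictly1Balanced F) {V : Type*} [DecidableEq V] (C : FGraph V)
    (k : ℕ) (hk : 2 ≤ k) (hC : IsCleanCycleOfLen F C k) (hdense : ¬IsSparse F C) :
    (shadowEdges C).card = k * edgeCnt F ∧
    C.1.card = k * (r - 1) ∧
    ((shadowEdges C).card : ℝ) / (C.1.card : ℝ) = d1 F ∧
    (∀ (W : Finset V) (E' : Finset (Sym2 V)), W ⊆ C.1 → E' ⊆ shadowEdges C →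
      (∀ e ∈ E', ∀ x ∈ e, x ∈ W) → ¬(W = C.1 ∧ E' = shadowEdges C) → 1 ≤ E'.card →
      (E'.card : ℝ) / (W.card : ℝ) < ((shadowEdges C).card : ℝ) / (C.1.card : ℝ)) := by
  obtain ⟨hwf, hsupV, hcases⟩ := hC
  rcases hcases with ⟨hk2, h₁, h₂, hneq, hC2, hTcard⟩ |
    ⟨hk3, h, hinj, hCimg, v, hvinj, hcons, hnon⟩
  · subst hk2
    have h1m : h₁ ∈ C.2 := by rw [hC2]; simp
    have h2m : h₂ ∈ C.2 := by rw [hC2]; simp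
    have H1a : h₁.IsCopyOf F := (hwf h₁ h1m).1
    have H1b : h₂.IsCopyOf F := (hwf h₂ h2m).1
    have hCimg : C.2 = Finset.image (![h₁, h₂] : Fin 2 → FEdge V) Finset.univ := by
      rw [hC2]; ext a
      simp [Fin.exists_fin_two, eq_comm]
    have H1 : ∀ i : Fin 2, ((![h₁, h₂] : Fin 2 → FEdge V) i).IsCopyOf F := by
      intro i; fin_cases i
      · exact H1a
      · exact H1b
    have hnotshare : ∀ x y : V, x ≠ y → h₁.1 ∩ h₂.1 = {x, y} →
        ¬(s(x, y) ∈ h₁.2 ∧ s(x, y) ∈ h₂.2) := by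
      rintro x y hxy hTeq ⟨hs1, hs2⟩
      exact hdense ⟨⟨hwf, hsupV, Or.inl ⟨rfl, h₁, h₂, hneq, hC2, hTcard⟩⟩,
        h₁, h₂, hneq, hC2, x, y, hxy, hTeq, hs1, hs2⟩
    have hd := k2_disj H1a H1b hTcard hnotshare
    have H2 : ∀ i j : Fin 2, i ≠ j →
        Disjoint ((![h₁, h₂] : Fin 2 → FEdge V) i).2 ((![h₁, h₂] : Fin 2 → FEdge V) j).2 := by
      intro i j hij
      fin_cases i <;> fin_cases j
      · exact absurd rfl hij
      · simpa using hd
      · simpa using hd.symm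
      · exact absurd rfl hij
    have H3 : ∀ x : V, (Finset.univ.filter
        fun i => x ∈ ((![h₁, h₂] : Fin 2 → FEdge V) i).1).card ≤ 2 := by
      intro x
      exact le_trans (Finset.card_filter_le _ _) (by simp)
    have hVset' : C.1 = Finset.univ.sup fun i => ((![h₁, h₂] : Fin 2 → FEdge V) i).1 := by
      rw [hsupV, hCimg, Finset.sup_image]; rfl
    exact assemble hr hF hk (![h₁, h₂]) hsupV hCimg H1 H2 H3
      (k2_H4 hTcard hVset') (fun I hI => k2_H5 I hI)
  · have H1 : ∀ i, (h i).IsCopyOf F := by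
      intro i
      have hmem : h i ∈ C.2 := by
        rw [hCimg]
        exact Finset.mem_image.mpr ⟨i, Finset.mem_univ i, rfl⟩
      exact (hwf (h i) hmem).1
    have hVset' : C.1 = Finset.univ.sup fun i => (h i).1 := by
      rw [hsupV, hCimg, Finset.sup_image]; rfl
    exact assemble hr hF hk h hsupV hCimg H1
      (H2_cycle3 hk3 H1 hcons hnon)
      (deg_le_two hk3 hvinj hcons hnon)
      (deg_two_set hk3 hvinj hcons hnon hVset')
      (fun I hI => H5_cycle3 hk3 hvinj hcons hnon C.1 I hI)

end
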